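/- Let Γ be a countable subgroup of the group of affine automorphisms of ℝᵐ, let M be a smooth manifold, and let X, Y : M → ℝᵐ be smooth maps such that X is a submersion and Y(x) ∈ Γ·X(x) := {γ(X(x)) : γ ∈ Γ} for every x ∈ M. Then there exists a locally constant map α : M → Γ such that Y(x) = α(x)(X(x)) for all x ∈ M. -/

import Mathlib

open scoped Manifold Topology ContDiff
open Set Function Filter

set_option maxHeartbeats 1000000

section Aux

variable {m : ℕ}

/-- The linear part of an affine automorphism of Euclidean space, as a continuous linear map. -/
noncomputable def linCLM (γ : EuclideanSpace ℝ (Fin m) ≃ᵃ[ℝ] EuclideanSpace ℝ (Fin m)) :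
    EuclideanSpace ℝ (Fin m) →L[ℝ] EuclideanSpace ℝ (Fin m) :=
  LinearMap.toContinuousLinearMap γ.linear.toLinearMap

@[simp] lemma linCLM_apply (γ : EuclideanSpace ℝ (Fin m) ≃ᵃ[ℝ] EuclideanSpace ℝ (Fin m))
    (v : EuclideanSpace ℝ (Fin m)) : linCLM γ v = γ.linear v := by
  simp [linCLM]

lemma affine_decomp (γ : EuclideanSpace ℝ (Fin m) ≃ᵃ[ℝ] EuclideanSpace ℝ (Fin m))
    (p : EuclideanSpace ℝ (Fin m)) : γ p = linCLM γ p + γ 0 := by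
  have h := γ.map_vadd 0 p
  simpa [vadd_eq_add] using h

lemma affine_hasFDerivAt (γ : EuclideanSpace ℝ (Fin m) ≃ᵃ[ℝ] EuclideanSpace ℝ (Fin m))
    (p : EuclideanSpace ℝ (Fin m)) : HasFDerivAt (⇑γ) (linCLM γ) p := by
  have h : (⇑γ) = fun q => linCLM γ q + γ 0 := funext fun q => affine_decomp γ q
  rw [h]
  exact (linCLM γ).hasFDerivAt.add_const _

lemma affine_continuous (γ : EuclideanSpace ℝ (Fin m) ≃ᵃ[ℝ] EuclideanSpace ℝ (Fin m)) :
    Continuous (⇑γ) := by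
  rw [show (⇑γ) = fun q => linCLM γ q + γ 0 from funext fun q => affine_decomp γ q]
  exact (linCLM γ).continuous.add continuous_const

/-- A continuous function on an open set vanishing on a "dense" subset vanishes everywhere. -/
lemma eq_zero_of_dense {X W : Type*} [TopologicalSpace X] [NormedAddCommGroup W]
    (f : X → W) {t' : Set X} (ht' : IsOpen t') (hf : ContinuousOn f t') {S : Set X}
    (hd : ∀ U : Set X, IsOpen U → U ⊆ t' → U.Nonempty → (U ∩ S).Nonempty)
    (h0 : ∀ w ∈ t' ∩ S, f w = 0) : ∀ w ∈ t', f w = 0 := by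
  intro w hw
  have hcl : w ∈ closure (t' ∩ S) := by
    rw [mem_closure_iff]
    intro o ho hwo
    obtain ⟨z, hz1, hz2⟩ := hd (o ∩ t') (ho.inter ht') inter_subset_right ⟨w, hwo, hw⟩
    exact ⟨z, hz1.1, hz1.2, hz2⟩
  haveI := mem_closure_iff_nhdsWithin_neBot.1 hcl
  have h1 : Tendsto f (𝓝[t' ∩ S] w) (𝓝 (f w)) :=
    (hf w hw).mono_left (nhdsWithin_mono _ inter_subset_left)
  have h2 : Tendsto f (𝓝[t' ∩ S] w) (𝓝 0) := by
    refine tendsto_const_nhds.congr' ?_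
    filter_upwards [self_mem_nhdsWithin] with y hy
    exact (h0 y hy).symm
  exact tendsto_nhds_unique h1 h2

end Aux

section Core

variable {d m : ℕ}

local notation "Ed" => EuclideanSpace ℝ (Fin d)
local notation "Vm" => EuclideanSpace ℝ (Fin m)

set_option maxHeartbeats 1000000 in
/-- Core analytic lemma, in a chart: if `G` agrees with some `T i ∘ F` near a dense set of points,
`F, G` are smooth and `F` is submersive at `w₀`, then `G = T i ∘ F` near `w₀`. -/
lemma core_affine {ι : Type*}
    (T : ι → (Vm ≃ᵃ[ℝ] Vm))
    {t : Set Ed} (ht : IsOpen t)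
    {w₀ : Ed} (hw₀ : w₀ ∈ t)
    {F G : Ed → Vm}
    (hF : ContDiffOn ℝ ∞ F t) (hG : ContDiffOn ℝ ∞ G t)
    (hsurj : Surjective (fderiv ℝ F w₀))
    (hdense : ∀ U : Set Ed, IsOpen U → U ⊆ t → U.Nonempty →
      ∃ w ∈ U, ∃ i : ι, ∀ᶠ y in 𝓝 w, G y = T i (F y)) :
    ∃ i : ι, ∀ᶠ y in 𝓝 w₀, G y = T i (F y) := by
  classical
  have h1top : (∞ : WithTop ℕ∞) ≠ 0 := by simp
  obtain ⟨hFdiff, hL⟩ := (contDiffOn_infty_iff_fderiv_of_isOpen ht).1 hF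
  obtain ⟨hGdiff, hL'⟩ := (contDiffOn_infty_iff_fderiv_of_isOpen ht).1 hG
  obtain ⟨hLdiff, hL2⟩ := (contDiffOn_infty_iff_fderiv_of_isOpen ht).1 hL
  obtain ⟨hL'diff, hL'2⟩ := (contDiffOn_infty_iff_fderiv_of_isOpen ht).1 hL'
  have hFd : ∀ w ∈ t, DifferentiableAt ℝ F w := fun w hw =>
    (hF.contDiffAt (ht.mem_nhds hw)).differentiableAt h1top
  have hGd : ∀ w ∈ t, DifferentiableAt ℝ G w := fun w hw =>
    (hG.contDiffAt (ht.mem_nhds hw)).differentiableAt h1top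
  have hLd : ∀ w ∈ t, DifferentiableAt ℝ (fderiv ℝ F) w := fun w hw =>
    (hL.contDiffAt (ht.mem_nhds hw)).differentiableAt h1top
  have hL'd : ∀ w ∈ t, DifferentiableAt ℝ (fderiv ℝ G) w := fun w hw =>
    (hL'.contDiffAt (ht.mem_nhds hw)).differentiableAt h1top
  -- right inverse of the derivative at `w₀`
  obtain ⟨ψ, hψ⟩ := LinearMap.exists_rightInverse_of_surjective
    (f := ((fderiv ℝ F w₀ : Ed →L[ℝ] Vm) : Ed →ₗ[ℝ] Vm))
    (by exact LinearMap.range_eq_top.2 hsurj)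
  set σ₀ : Vm →L[ℝ] Ed := LinearMap.toContinuousLinearMap ψ with hσ₀def
  have hσ₀v : ∀ v, fderiv ℝ F w₀ (σ₀ v) = v := by
    intro v
    have h := LinearMap.congr_fun hψ v
    simpa [hσ₀def] using h
  set R : Ed → (Vm →L[ℝ] Vm) := fun w => (fderiv ℝ F w).comp σ₀ with hRdef
  have hRcont : ContinuousOn R t :=
    ((ContinuousLinearMap.compL ℝ Vm Ed Vm).flip σ₀).continuous.comp_continuousOn hL.continuousOn
  set t' : Set Ed := t ∩ R ⁻¹' {r : Vm →L[ℝ] Vm | IsUnit r} with ht'def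
  have ht'sub : t' ⊆ t := inter_subset_left
  have ht' : IsOpen t' := hRcont.isOpen_inter_preimage ht Units.isOpen
  have hR1 : R w₀ = 1 := by
    refine ContinuousLinearMap.ext fun v => ?_
    simp [hRdef, hσ₀v v]
  have hw₀' : w₀ ∈ t' := ⟨hw₀, by simp [mem_preimage, hR1]⟩
  set σ : Ed → (Vm →L[ℝ] Ed) := fun w => σ₀.comp (Ring.inverse (R w)) with hσdef
  have hRσ : ∀ w ∈ t', (fderiv ℝ F w).comp (σ w) = ContinuousLinearMap.id ℝ Vm := by
    intro w hw
    have hu : IsUnit (R w) := hw.2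
    have h1 : (fderiv ℝ F w).comp (σ w) = R w * Ring.inverse (R w) := by
      rw [hσdef]
      exact ((fderiv ℝ F w).comp_assoc σ₀ (Ring.inverse (R w))).symm
    rw [h1, Ring.mul_inverse_cancel _ hu, ContinuousLinearMap.one_def]
  have hRσ' : ∀ w ∈ t', ∀ v, (fderiv ℝ F w) (σ w v) = v := by
    intro w hw v
    have := ContinuousLinearMap.ext_iff.1 (hRσ w hw) v
    simpa using this
  have hσdiff : ∀ w ∈ t', ContDiffAt ℝ ∞ σ w := by
    intro w hw
    have hRd : ContDiffAt ℝ ∞ R w :=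
      (((ContinuousLinearMap.compL ℝ Vm Ed Vm).flip σ₀).contDiff).comp_contDiffAt w
        (hL.contDiffAt (ht.mem_nhds hw.1))
    have hinv : ContDiffAt ℝ ∞ Ring.inverse (R w) := by
      have h := contDiffAt_ringInverse ℝ (n := ∞) hw.2.unit
      rwa [hw.2.unit_spec] at h
    have h2 : ContDiffAt ℝ ∞ (fun y => Ring.inverse (R y)) w := hinv.comp w hRd
    exact ((ContinuousLinearMap.compL ℝ Vm Vm Ed σ₀).contDiff).comp_contDiffAt w h2
  set A : Ed → (Vm →L[ℝ] Vm) := fun w => (fderiv ℝ G w).comp (σ w) with hAdef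
  have hAdiff : ∀ w ∈ t', ContDiffAt ℝ ∞ A w := fun w hw =>
    (hL'.contDiffAt (ht.mem_nhds hw.1)).clm_comp (hσdiff w hw)
  have hAcont : ContinuousOn A t' := fun w hw =>
    ((hAdiff w hw).continuousAt).continuousWithinAt
  -- first-order consequence at points of local agreement
  have fact1 : ∀ w ∈ t, ∀ i : ι, (∀ᶠ y in 𝓝 w, G y = T i (F y)) →
      fderiv ℝ G w = (linCLM (T i)).comp (fderiv ℝ F w) := by
    intro w hw i hev
    have h1 : G =ᶠ[𝓝 w] fun y => T i (F y) := hev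
    rw [h1.fderiv_eq]
    exact ((affine_hasFDerivAt (T i) (F w)).comp w (hFd w hw).hasFDerivAt).fderiv
  have fact3 : ∀ w ∈ t', ∀ i : ι, (∀ᶠ y in 𝓝 w, G y = T i (F y)) → A w = linCLM (T i) := by
    intro w hw i hev
    show (fderiv ℝ G w).comp (σ w) = _
    rw [fact1 w hw.1 i hev, ContinuousLinearMap.comp_assoc, hRσ w hw,
      ContinuousLinearMap.comp_id]
  -- second-order consequence
  have fact2 : ∀ w ∈ t, ∀ i : ι, (∀ᶠ y in 𝓝 w, G y = T i (F y)) →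
      fderiv ℝ (fderiv ℝ G) w =
        ((ContinuousLinearMap.compL ℝ Ed Vm Vm) (linCLM (T i))).comp
          (fderiv ℝ (fderiv ℝ F) w) := by
    intro w hw i hev
    have h2 : (fderiv ℝ G) =ᶠ[𝓝 w] fun y => (linCLM (T i)).comp (fderiv ℝ F y) := by
      filter_upwards [hev.eventually_nhds, ht.mem_nhds hw] with y hy hyt
      exact fact1 y hyt i hy
    rw [h2.fderiv_eq]
    exact (((ContinuousLinearMap.compL ℝ Ed Vm Vm) (linCLM (T i))).hasFDerivAt.comp w
      (hLd w hw).hasFDerivAt).fderiv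
  -- dense set of local agreement
  set S : Set Ed := {w | ∃ i : ι, ∀ᶠ y in 𝓝 w, G y = T i (F y)} with hSdef
  have hdense' : ∀ U : Set Ed, IsOpen U → U ⊆ t' → U.Nonempty → (U ∩ S).Nonempty := by
    intro U hU hsub hne
    obtain ⟨w, hwU, i, hev⟩ := hdense U hU (hsub.trans ht'sub) hne
    exact ⟨w, hwU, ⟨i, hev⟩⟩
  -- B vanishes on t'
  set B : Ed → (Ed →L[ℝ] Vm) := fun w => fderiv ℝ G w - (A w).comp (fderiv ℝ F w) with hBdef
  have hBcont : ContinuousOn B t' :=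
    (hL'.continuousOn.mono ht'sub).sub (hAcont.clm_comp (hL.continuousOn.mono ht'sub))
  have hB0 : ∀ w ∈ t', B w = 0 := by
    refine eq_zero_of_dense B ht' hBcont hdense' ?_
    rintro w ⟨hw, i, hev⟩
    show fderiv ℝ G w - (A w).comp (fderiv ℝ F w) = 0
    rw [fact1 w hw.1 i hev, fact3 w hw i hev, sub_self]
  -- G2 vanishes on t'
  set G2 : Ed → (Ed →L[ℝ] (Ed →L[ℝ] Vm)) := fun w =>
    fderiv ℝ (fderiv ℝ G) w -
      ((ContinuousLinearMap.compL ℝ Ed Vm Vm) (A w)).comp (fderiv ℝ (fderiv ℝ F) w) with hG2def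
  have hG2cont : ContinuousOn G2 t' := by
    have hcompA : ContinuousOn (fun w => (ContinuousLinearMap.compL ℝ Ed Vm Vm) (A w)) t' :=
      (ContinuousLinearMap.continuous _).comp_continuousOn hAcont
    exact (hL'2.continuousOn.mono ht'sub).sub (hcompA.clm_comp (hL2.continuousOn.mono ht'sub))
  have hG20 : ∀ w ∈ t', G2 w = 0 := by
    refine eq_zero_of_dense G2 ht' hG2cont hdense' ?_
    rintro w ⟨hw, i, hev⟩
    show fderiv ℝ (fderiv ℝ G) w - _ = 0
    rw [fact2 w hw.1 i hev, fact3 w hw i hev]; exact sub_self (G := Ed →L[ℝ] Ed →L[ℝ] Vm) _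
  -- derivative of A vanishes on t'
  have hDA : ∀ w ∈ t', fderiv ℝ A w = 0 := by
    intro w hw
    have hBev : (fderiv ℝ G) =ᶠ[𝓝 w] fun y => (A y).comp (fderiv ℝ F y) := by
      filter_upwards [ht'.mem_nhds hw] with y hy
      exact sub_eq_zero.1 (hB0 y hy)
    have hA_at : HasFDerivAt A (fderiv ℝ A w) w :=
      ((hAdiff w hw).differentiableAt h1top).hasFDerivAt
    have hL_at : HasFDerivAt (fderiv ℝ F) (fderiv ℝ (fderiv ℝ F) w) w :=
      (hLd w hw.1).hasFDerivAt
    have hcomp := hA_at.clm_comp hL_at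
    have hL'fd : HasFDerivAt (fderiv ℝ G)
        (((ContinuousLinearMap.compL ℝ Ed Vm Vm) (A w)).comp (fderiv ℝ (fderiv ℝ F) w) +
          (((ContinuousLinearMap.compL ℝ Ed Vm Vm).flip (fderiv ℝ F w)).comp (fderiv ℝ A w))) w :=
      hcomp.congr_of_eventuallyEq hBev
    have heq := hL'fd.fderiv
    have h2 : fderiv ℝ (fderiv ℝ G) w =
        ((ContinuousLinearMap.compL ℝ Ed Vm Vm) (A w)).comp (fderiv ℝ (fderiv ℝ F) w) :=
      sub_eq_zero.1 (hG20 w hw)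
    have hflip : (((ContinuousLinearMap.compL ℝ Ed Vm Vm).flip (fderiv ℝ F w)).comp
        (fderiv ℝ A w)) = 0 := by
      have h3 := heq.symm.trans h2
      -- h3 : X + Y = X
      have := (add_sub_cancel_left (G := Ed →L[ℝ] Ed →L[ℝ] Vm) _ _).symm.trans
        ((congrArg (· - _) h3).trans (sub_self (G := Ed →L[ℝ] Ed →L[ℝ] Vm) _))
      exact this
    have h5 : ∀ e : Ed, ((fderiv ℝ A w) e).comp (fderiv ℝ F w) = 0 := by
      intro e
      have h6 := ContinuousLinearMap.ext_iff.1 hflip e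
      simpa [ContinuousLinearMap.comp_apply, ContinuousLinearMap.flip_apply,
        ContinuousLinearMap.compL_apply] using h6
    refine ContinuousLinearMap.ext fun e => ContinuousLinearMap.ext fun v => ?_
    have hv : (fderiv ℝ F w) (σ w v) = v := hRσ' w hw v
    calc (fderiv ℝ A w) e v = (fderiv ℝ A w) e ((fderiv ℝ F w) (σ w v)) := by rw [hv]
      _ = (((fderiv ℝ A w) e).comp (fderiv ℝ F w)) (σ w v) := rfl
      _ = 0 := by rw [h5 e]; simp
  -- A is constant on a ball around w₀
  obtain ⟨ε, hε, hball⟩ := Metric.isOpen_iff.1 ht' w₀ hw₀'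
  have hbconv : Convex ℝ (Metric.ball w₀ ε) := convex_ball _ _
  have hw₀b : w₀ ∈ Metric.ball w₀ ε := Metric.mem_ball_self hε
  have hAdiffb : ∀ x ∈ Metric.ball w₀ ε, DifferentiableAt ℝ A x := fun x hx =>
    (hAdiff x (hball hx)).differentiableAt h1top
  have hAbound : ∀ x ∈ Metric.ball w₀ ε, ‖fderiv ℝ A x‖ ≤ 0 := fun x hx => by
    rw [hDA x (hball hx)]; exact (norm_zero (E := Ed →L[ℝ] Vm →L[ℝ] Vm)).le
  have hAconst : ∀ x ∈ Metric.ball w₀ ε, A x = A w₀ := by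
    intro x hx
    have h := hbconv.norm_image_sub_le_of_norm_fderiv_le hAdiffb hAbound hw₀b hx
    have h1 : ‖A x - A w₀‖ ≤ 0 := le_of_le_of_eq h (zero_mul _)
    have := norm_le_zero_iff.1 h1
    exact sub_eq_zero.1 this
  -- G is affine over F on the ball
  have hHconst : ∀ x ∈ Metric.ball w₀ ε,
      G x - (A w₀) (F x) = G w₀ - (A w₀) (F w₀) := by
    have hHd : ∀ x ∈ Metric.ball w₀ ε,
        DifferentiableAt ℝ (fun y => G y - (A w₀) (F y)) x := fun x hx =>
      (hGd x (hball hx).1).sub ((A w₀).differentiableAt.comp x (hFd x (hball hx).1))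
    have hH0 : ∀ x ∈ Metric.ball w₀ ε, fderiv ℝ (fun y => G y - (A w₀) (F y)) x = 0 := by
      intro x hx
      have hx' := hball hx
      have h1 : HasFDerivAt (fun y => G y - (A w₀) (F y))
          (fderiv ℝ G x - (A w₀).comp (fderiv ℝ F x)) x :=
        (hGd x hx'.1).hasFDerivAt.sub (((A w₀).hasFDerivAt).comp x (hFd x hx'.1).hasFDerivAt)
      have h2 : fderiv ℝ G x = (A w₀).comp (fderiv ℝ F x) := by
        have hB := sub_eq_zero.1 (hB0 x hx')
        rw [hB, hAconst x hx]
      rw [h1.fderiv, h2, sub_self]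
    have hHbound : ∀ x ∈ Metric.ball w₀ ε,
        ‖fderiv ℝ (fun y => G y - (A w₀) (F y)) x‖ ≤ 0 := fun x hx => by
      rw [hH0 x hx]; simp
    intro x hx
    have h := hbconv.norm_image_sub_le_of_norm_fderiv_le hHd hHbound hw₀b hx
    have h1 : ‖(G x - (A w₀) (F x)) - (G w₀ - (A w₀) (F w₀))‖ ≤ 0 := le_of_le_of_eq h (zero_mul _)
    have := norm_le_zero_iff.1 h1
    exact sub_eq_zero.1 this
  -- extract the witness
  obtain ⟨w₁, hw₁b, i, hev⟩ := hdense (Metric.ball w₀ ε) Metric.isOpen_ball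
    (fun x hx => (hball hx).1) ⟨w₀, hw₀b⟩
  have hA1 : linCLM (T i) = A w₀ := by
    rw [← fact3 w₁ (hball hw₁b) i hev, hAconst w₁ hw₁b]
  have hTi0 : T i 0 = G w₀ - (A w₀) (F w₀) := by
    have h1 : G w₁ = T i (F w₁) := hev.self_of_nhds
    have h2 := hHconst w₁ hw₁b
    have h3 : T i (F w₁) = linCLM (T i) (F w₁) + T i 0 := affine_decomp _ _
    rw [h1, h3, hA1] at h2
    simpa [add_sub_cancel_left] using h2
  refine ⟨i, ?_⟩
  filter_upwards [Metric.ball_mem_nhds w₀ hε] with y hy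
  have h4 := hHconst y hy
  have h5 : T i (F y) = linCLM (T i) (F y) + T i 0 := affine_decomp _ _
  rw [h5, hA1, hTi0]
  have := sub_eq_iff_eq_add.1 h4
  rw [this]
  abel

end Core

/-- If `Γ` is a countable group of affine automorphisms of `ℝᵐ`, `X, Y : M → ℝᵐ`
are smooth maps from a manifold with `X` a submersion and `Y x` in the `Γ`-orbit of `X x` for
every `x`, then there is a locally constant map `α : M → Γ` with `Y x = α x (X x)` for all `x`. -/
theorem locally_constant_affine_cocycle
    {d m : ℕ}
    {M : Type*} [TopologicalSpace M] [ChartedSpace (EuclideanSpace ℝ (Fin d)) M]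
    [IsManifold (𝓡 d) (⊤ : ℕ∞) M] [T2Space M] [SecondCountableTopology M]
    (Γ : Subgroup (EuclideanSpace ℝ (Fin m) ≃ᵃ[ℝ] EuclideanSpace ℝ (Fin m)))
    (hΓ : Countable Γ)
    (X Y : M → EuclideanSpace ℝ (Fin m))
    (hX : ContMDiff (𝓡 d) (𝓡 m) (⊤ : ℕ∞) X) (hY : ContMDiff (𝓡 d) (𝓡 m) (⊤ : ℕ∞) Y)
    (hsub : ∀ x : M, Function.Surjective (mfderiv (𝓡 d) (𝓡 m) X x))
    (horb : ∀ x : M, ∃ γ ∈ Γ, Y x = γ (X x)) :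
    ∃ α : M → Γ, IsLocallyConstant α ∧ ∀ x : M, Y x = (α x).val (X x) := by
  classical
  haveI : Countable Γ := hΓ
  have h1top : (∞ : WithTop ℕ∞) ≠ 0 := by simp
  have hXc : Continuous X := hX.continuous
  have hYc : Continuous Y := hY.continuous
  haveI : LocallyCompactSpace M :=
    ChartedSpace.locallyCompactSpace (EuclideanSpace ℝ (Fin d)) (M := M)
  -- the dense union of interiors (Baire)
  have hclosed : ∀ γ : Γ, IsClosed {x : M | Y x = γ.val (X x)} := fun γ =>
    isClosed_eq hYc ((affine_continuous γ.val).comp hXc)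
  have hcover : (⋃ γ : Γ, {x : M | Y x = γ.val (X x)}) = univ := by
    ext x
    simp only [mem_iUnion, mem_univ, iff_true, mem_setOf_eq]
    obtain ⟨γ, hγΓ, hγ⟩ := horb x
    exact ⟨⟨γ, hγΓ⟩, hγ⟩
  have hdenseM : Dense (⋃ γ : Γ, interior {x : M | Y x = γ.val (X x)}) :=
    dense_iUnion_interior_of_closed hclosed hcover
  -- key local existence
  have key : ∀ x₀ : M, ∃ γ : Γ, ∀ᶠ y in 𝓝 x₀, Y y = γ.val (X y) := by
    intro x₀
    set φ := chartAt (EuclideanSpace ℝ (Fin d)) x₀ with hφdef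
    have hx₀s : x₀ ∈ φ.source := mem_chart_source _ x₀
    have hsymm : ContMDiffOn (𝓡 d) (𝓡 d) (⊤ : ℕ∞) φ.symm φ.target := contMDiffOn_chart_symm
    have hFc : ContDiffOn ℝ ∞ (X ∘ φ.symm) φ.target :=
      contMDiffOn_iff_contDiffOn.1 (hX.comp_contMDiffOn hsymm)
    have hGc : ContDiffOn ℝ ∞ (Y ∘ φ.symm) φ.target :=
      contMDiffOn_iff_contDiffOn.1 (hY.comp_contMDiffOn hsymm)
    have hw₀ : φ x₀ ∈ φ.target := φ.map_source hx₀s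
    -- surjectivity of the differential in the chart
    have hXev : X =ᶠ[𝓝 x₀] (X ∘ φ.symm) ∘ φ := by
      filter_upwards [φ.open_source.mem_nhds hx₀s] with y hy
      simp [Function.comp, φ.left_inv hy]
    have hFmd : MDifferentiableAt (𝓡 d) (𝓡 m) (X ∘ φ.symm) (φ x₀) := by
      have h1 : DifferentiableAt ℝ (X ∘ φ.symm) (φ x₀) :=
        (hFc.contDiffAt (φ.open_target.mem_nhds hw₀)).differentiableAt h1top
      exact h1.mdifferentiableAt
    have hφmd : MDifferentiableAt (𝓡 d) (𝓡 d) φ x₀ :=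
      mdifferentiableAt_atlas (chart_mem_atlas _ x₀) hx₀s
    have hXm : mfderiv (𝓡 d) (𝓡 m) X x₀ =
        (mfderiv (𝓡 d) (𝓡 m) (X ∘ φ.symm) (φ x₀)).comp (mfderiv (𝓡 d) (𝓡 d) φ x₀) := by
      rw [hXev.mfderiv_eq]
      exact mfderiv_comp x₀ hFmd hφmd
    have hsurjF : Surjective (fderiv ℝ (X ∘ φ.symm) (φ x₀)) := by
      have h1 := hsub x₀
      rw [hXm] at h1
      have h2 : Surjective (mfderiv (𝓡 d) (𝓡 m) (X ∘ φ.symm) (φ x₀)) := by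
        intro v
        obtain ⟨u, hu⟩ := h1 v
        exact ⟨mfderiv (𝓡 d) (𝓡 d) φ x₀ u, hu⟩
      rwa [mfderiv_eq_fderiv] at h2
    -- density hypothesis in the chart
    have hdense : ∀ U : Set (EuclideanSpace ℝ (Fin d)), IsOpen U → U ⊆ φ.target →
        U.Nonempty → ∃ w ∈ U, ∃ γ : Γ, ∀ᶠ y in 𝓝 w, (Y ∘ φ.symm) y = γ.val ((X ∘ φ.symm) y) := by
      intro U hU hUt hUne
      have hopen : IsOpen (φ.source ∩ φ ⁻¹' U) :=
        φ.continuousOn.isOpen_inter_preimage φ.open_source hU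
      have hne : (φ.source ∩ φ ⁻¹' U).Nonempty := by
        obtain ⟨w, hwU⟩ := hUne
        refine ⟨φ.symm w, φ.map_target (hUt hwU), ?_⟩
        simp [φ.right_inv (hUt hwU), hwU]
      obtain ⟨x, hxD, hxU⟩ := hdenseM.exists_mem_open hopen hne
      obtain ⟨γ, hγ⟩ := mem_iUnion.1 hxD
      refine ⟨φ x, hxU.2, γ, ?_⟩
      have hcont : ContinuousAt φ.symm (φ x) := φ.continuousAt_symm (φ.map_source hxU.1)
      have hnb : interior {x' : M | Y x' = γ.val (X x')} ∈ 𝓝 (φ.symm (φ x)) := by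
        rw [φ.left_inv hxU.1]
        exact isOpen_interior.mem_nhds hγ
      filter_upwards [hcont.preimage_mem_nhds hnb] with y hy
      have h7 : φ.symm y ∈ interior {x' : M | Y x' = γ.val (X x')} := hy
      have h8 : φ.symm y ∈ {x' : M | Y x' = γ.val (X x')} := interior_subset h7
      exact h8
    obtain ⟨γ, hγ⟩ := core_affine (fun γ : Γ => γ.val) φ.open_target hw₀ hFc hGc hsurjF hdense
    refine ⟨γ, ?_⟩
    have hφcont : ContinuousAt φ x₀ := φ.continuousAt hx₀s
    filter_upwards [hφcont.eventually hγ, φ.open_source.mem_nhds hx₀s] with y h1 h2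
    have h3 : (Y ∘ φ.symm) (φ y) = γ.val ((X ∘ φ.symm) (φ y)) := h1
    simpa [Function.comp, φ.left_inv h2] using h3
  -- uniqueness
  have uniq : ∀ (x : M) (γ γ' : Γ), (∀ᶠ y in 𝓝 x, Y y = γ.val (X y)) →
      (∀ᶠ y in 𝓝 x, Y y = γ'.val (X y)) → γ = γ' := by
    intro x γ γ' h h'
    have hval : γ.val (X x) = γ'.val (X x) := (h.self_of_nhds).symm.trans h'.self_of_nhds
    have heq : (fun y => γ.val (X y)) =ᶠ[𝓝 x] (fun y => γ'.val (X y)) := by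
      filter_upwards [h, h'] with y hy hy'
      rw [← hy]; exact hy'
    have hmd : MDifferentiableAt (𝓡 d) (𝓡 m) X x := hX.mdifferentiableAt (by simp)
    have hγmd : MDifferentiableAt (𝓡 m) (𝓡 m) (⇑γ.val) (X x) :=
      ((affine_hasFDerivAt γ.val (X x)).differentiableAt).mdifferentiableAt
    have hγ'md : MDifferentiableAt (𝓡 m) (𝓡 m) (⇑γ'.val) (X x) :=
      ((affine_hasFDerivAt γ'.val (X x)).differentiableAt).mdifferentiableAt
    have hc1 : mfderiv (𝓡 d) (𝓡 m) (fun y => γ.val (X y)) x =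
        (linCLM γ.val).comp (mfderiv (𝓡 d) (𝓡 m) X x) := by
      have := mfderiv_comp x hγmd hmd
      rw [show (fun y => γ.val (X y)) = ⇑γ.val ∘ X from rfl, this]
      congr 1
      rw [mfderiv_eq_fderiv]
      exact (affine_hasFDerivAt γ.val (X x)).fderiv
    have hc2 : mfderiv (𝓡 d) (𝓡 m) (fun y => γ'.val (X y)) x =
        (linCLM γ'.val).comp (mfderiv (𝓡 d) (𝓡 m) X x) := by
      have := mfderiv_comp x hγ'md hmd
      rw [show (fun y => γ'.val (X y)) = ⇑γ'.val ∘ X from rfl, this]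
      congr 1
      rw [mfderiv_eq_fderiv]
      exact (affine_hasFDerivAt γ'.val (X x)).fderiv
    have hcc := heq.mfderiv_eq (I := 𝓡 d) (I' := 𝓡 m)
    rw [hc1, hc2] at hcc
    have hlin : linCLM γ.val = linCLM γ'.val := by
      refine ContinuousLinearMap.ext fun v => ?_
      obtain ⟨u, hu⟩ := hsub x v
      have h6 := ContinuousLinearMap.ext_iff.1 hcc u
      have h7 : linCLM γ.val ((mfderiv (𝓡 d) (𝓡 m) X x) u) =
          linCLM γ'.val ((mfderiv (𝓡 d) (𝓡 m) X x) u) := h6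
      rw [hu] at h7
      exact h7
    have hfun : ∀ p, γ.val p = γ'.val p := by
      intro p
      have e1 : γ.val p = linCLM γ.val (p - X x) + γ.val (X x) := by
        have h := (γ.val).map_vadd (X x) (p - X x)
        simpa [vadd_eq_add, sub_add_cancel] using h
      have e2 : γ'.val p = linCLM γ'.val (p - X x) + γ'.val (X x) := by
        have h := (γ'.val).map_vadd (X x) (p - X x)
        simpa [vadd_eq_add, sub_add_cancel] using h
      rw [e1, e2, hlin, hval]
    exact Subtype.ext (AffineEquiv.ext hfun)
  -- assemble
  choose α hα using key
  have hevc : ∀ x, ∀ᶠ y in 𝓝 x, α y = α x := by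
    intro x
    filter_upwards [(hα x).eventually_nhds] with y hy
    exact uniq y (α y) (α x) (hα y) hy
  refine ⟨α, ?_, fun x => (hα x).self_of_nhds⟩
  intro s
  rw [isOpen_iff_mem_nhds]
  intro x hx
  have : ∀ᶠ y in 𝓝 x, α y ∈ s := by
    filter_upwards [hevc x] with y hy
    rw [hy]; exact hx
  exact this
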